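/- arXiv:2312.04001 — 2 statements merged into one kernel-verified Lean document; each statement's English description precedes it below -/
import Mathlib

section
/- For a probability measure μ on ℝ^d that is locally lower bounded by the Lebesgue measure (i.e., there exist ε₀ > 0, a ∈ ℝ^d, τ > 0 with μ(E) ≥ ε₀·Leb(E ∩ B(a,τ)) for all Borel E), there exist p ∈ (0,1) and probability measures μ̂ and ν on ℝ^d such that μ = (1-p)·μ̂ + p·ν, where μ̂ has density c·exp(-1/(τ² - |z-a|²))·1_{B(a,τ)}(z) with respect to Lebesgue measure (c the normalizing constant). -/
open MeasureTheory Set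

noncomputable section

theorem stmt_0 {d : ℕ} (μ : Measure (EuclideanSpace ℝ (Fin d))) [IsProbabilityMeasure μ]
    (ε₀ τ : ℝ) (a : EuclideanSpace ℝ (Fin d)) (hε : 0 < ε₀) (hτ : 0 < τ)
    (hlb : ∀ E : Set (EuclideanSpace ℝ (Fin d)), MeasurableSet E →
      ENNReal.ofReal ε₀ * volume (E ∩ Metric.ball a τ) ≤ μ E) :
    ∃ p : ℝ, p ∈ Set.Ioo (0 : ℝ) 1 ∧
      ∃ μhat ν : Measure (EuclideanSpace ℝ (Fin d)),
        IsProbabilityMeasure μhat ∧ IsProbabilityMeasure ν ∧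
        μhat = volume.withDensity (fun z =>
          ENNReal.ofReal ((Metric.ball a τ).indicator
            (fun z => (∫ w in Metric.ball a τ, Real.exp (-(τ ^ 2 - ‖w - a‖ ^ 2)⁻¹))⁻¹ *
              Real.exp (-(τ ^ 2 - ‖z - a‖ ^ 2)⁻¹)) z)) ∧
        μ = ENNReal.ofReal (1 - p) • μhat + ENNReal.ofReal p • ν := by
  set B := Metric.ball a τ with hB
  have hBm : MeasurableSet B := measurableSet_ball
  set φ : EuclideanSpace ℝ (Fin d) → ℝ := fun w => Real.exp (-(τ ^ 2 - ‖w - a‖ ^ 2)⁻¹) with hφ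
  have hφm : Measurable φ := by fun_prop
  have hφpos : ∀ w, 0 < φ w := fun w => Real.exp_pos _
  have hφle : ∀ w ∈ B, φ w ≤ 1 := by
    intro w hw
    apply Real.exp_le_one_iff.mpr
    simp only [neg_nonpos]
    apply inv_nonneg.mpr
    have : ‖w - a‖ < τ := by simpa [hB, dist_eq_norm] using hw
    nlinarith [norm_nonneg (w - a)]
  have hint : IntegrableOn φ B volume := by
    refine Measure.integrableOn_of_bounded (M := 1) measure_ball_lt_top.ne
      hφm.aestronglyMeasurable ?_
    filter_upwards [ae_restrict_mem hBm] with w hw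
    rw [Real.norm_eq_abs, abs_of_pos (hφpos w)]
    exact hφle w hw
  set I : ℝ := ∫ w in B, φ w with hI
  have hIpos : 0 < I := by
    rw [hI]
    refine (setIntegral_pos_iff_support_of_nonneg_ae ?_ hint).mpr ?_
    · filter_upwards with w using (hφpos w).le
    · have hsupp : Function.support φ = univ := by
        ext w; simp [Function.mem_support, (hφpos w).ne']
      rw [hsupp, univ_inter]
      exact Metric.measure_ball_pos _ _ hτ
  set c : ℝ := I⁻¹ with hc
  have hcpos : 0 < c := inv_pos.mpr hIpos
  -- the density g
  set g : EuclideanSpace ℝ (Fin d) → ℝ := B.indicator (fun z => c * φ z) with hg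
  have hgnn : ∀ z, 0 ≤ g z := fun z =>
    indicator_nonneg (fun w _ => by positivity) z
  have hgm : Measurable g := (hφm.const_mul c).indicator hBm
  have hgint : Integrable g volume := by
    rw [hg, integrable_indicator_iff hBm]
    exact (hint.const_mul c)
  have hgintegral : ∫ z, g z = 1 := by
    rw [hg, integral_indicator hBm, integral_const_mul, hc, inv_mul_cancel₀ hIpos.ne']
  set μhat := volume.withDensity (fun z => ENNReal.ofReal (g z)) with hμhat
  have hμhat_univ : μhat univ = 1 := by
    rw [hμhat, withDensity_apply _ MeasurableSet.univ, Measure.restrict_univ,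
      ← ofReal_integral_eq_lintegral_ofReal hgint (Filter.Eventually.of_forall hgnn),
      hgintegral, ENNReal.ofReal_one]
  have hμhat_prob : IsProbabilityMeasure μhat := ⟨hμhat_univ⟩
  -- choose q
  set q : ℝ := min (1/2) (ε₀ / c) with hq
  have hq0 : 0 < q := lt_min (by norm_num) (div_pos hε hcpos)
  have hq1 : q ≤ 1/2 := min_le_left _ _
  have hqc : q * c ≤ ε₀ := by
    calc q * c ≤ (ε₀ / c) * c := by
          exact mul_le_mul_of_nonneg_right (min_le_right _ _) hcpos.le
      _ = ε₀ := div_mul_cancel₀ _ hcpos.ne'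
  set p : ℝ := 1 - q with hp
  have hp0 : 0 < p := by rw [hp]; linarith
  have hp1 : p < 1 := by rw [hp]; linarith
  -- key: q • μhat ≤ μ
  have hle : (ENNReal.ofReal q) • μhat ≤ μ := by
    rw [Measure.le_iff]
    intro E hE
    have h1 : ((ENNReal.ofReal q) • μhat) E = ∫⁻ z in E, ENNReal.ofReal q * ENNReal.ofReal (g z) := by
      rw [Measure.smul_apply, smul_eq_mul, hμhat, withDensity_apply _ hE, ← lintegral_const_mul]
      exact ENNReal.measurable_ofReal.comp hgm
    calc ((ENNReal.ofReal q) • μhat) E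
        = ∫⁻ z in E, ENNReal.ofReal q * ENNReal.ofReal (g z) := h1
      _ ≤ ∫⁻ z in E, B.indicator (fun _ => ENNReal.ofReal ε₀) z := by
          apply lintegral_mono; intro z
          dsimp only
          rw [← ENNReal.ofReal_mul hq0.le]
          by_cases hz : z ∈ B
          · rw [indicator_of_mem hz]
            apply ENNReal.ofReal_le_ofReal
            rw [hg, indicator_of_mem hz]
            have h2 := hφle z hz
            have h3 := (hφpos z).le
            nlinarith
          · rw [indicator_of_notMem hz, hg, indicator_of_notMem hz]; simp
      _ = ENNReal.ofReal ε₀ * volume (E ∩ B) := by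
          rw [lintegral_indicator hBm, setLIntegral_const, Measure.restrict_apply hBm,
            inter_comm]
      _ ≤ μ E := hlb E hE
  haveI hfin : IsFiniteMeasure ((ENNReal.ofReal q) • μhat) := by
    constructor
    rw [Measure.smul_apply, smul_eq_mul, hμhat_univ, mul_one]
    exact ENNReal.ofReal_lt_top
  have hopq : (1 : ENNReal) - ENNReal.ofReal q = ENNReal.ofReal p := by
    rw [hp, ENNReal.ofReal_sub _ hq0.le, ENNReal.ofReal_one]
  have hsub_univ : (μ - ENNReal.ofReal q • μhat) univ = ENNReal.ofReal p := by
    rw [Measure.sub_apply MeasurableSet.univ hle, measure_univ, Measure.smul_apply,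
      smul_eq_mul, hμhat_univ, mul_one, hopq]
  have hpne0 : ENNReal.ofReal p ≠ 0 := (ENNReal.ofReal_pos.mpr hp0).ne'
  set ν := (ENNReal.ofReal p)⁻¹ • (μ - ENNReal.ofReal q • μhat) with hν
  have hν_prob : IsProbabilityMeasure ν := by
    constructor
    rw [hν, Measure.smul_apply, smul_eq_mul, hsub_univ,
      ENNReal.inv_mul_cancel hpne0 ENNReal.ofReal_ne_top]
  refine ⟨p, ⟨hp0, hp1⟩, μhat, ν, hμhat_prob, hν_prob, rfl, ?_⟩
  have h1p : (1 : ℝ) - p = q := by rw [hp]; ring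
  rw [h1p]
  have hpν : ENNReal.ofReal p • ν = μ - ENNReal.ofReal q • μhat := by
    rw [hν, smul_smul, ENNReal.mul_inv_cancel hpne0 ENNReal.ofReal_ne_top, one_smul]
  rw [hpν, add_comm, Measure.sub_add_cancel_of_le hle]
end
end

section
/- Let α ∈ (1,2), ν a probability measure on S^{d-1}, and L^{α,ν} f(x) = d_α ∫_{S^{d-1}} ν(dθ) ∫_0^∞ [f(x+rθ) - f(x) - ⟨∇f(x), rθ⟩] r^{-1-α} dr for f ∈ C_b²(ℝ^d). Then there is a constant C (depending only on α) such that for all f ∈ C_b²(ℝ^d) and all x,y ∈ ℝ^d: |L^{α,ν} f(x) - L^{α,ν} f(y)| ≤ C ‖∇²f‖_{op,∞} |x-y|^{2-α}. -/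
open MeasureTheory Set

noncomputable section

section aux
variable {d : ℕ}
local notation "E" => EuclideanSpace ℝ (Fin d)



lemma norm_fderiv2_le {f : E → ℝ} {M2 : ℝ}
    (hM2 : ∀ z, ‖iteratedFDeriv ℝ 2 f z‖ ≤ M2) (z : E) :
    ‖fderiv ℝ (fderiv ℝ f) z‖ ≤ M2 := by
  calc ‖fderiv ℝ (fderiv ℝ f) z‖
      = ‖iteratedFDeriv ℝ 0 (fderiv ℝ (fderiv ℝ f)) z‖ := by rw [norm_iteratedFDeriv_zero]
    _ = ‖iteratedFDeriv ℝ 1 (fderiv ℝ f) z‖ := norm_iteratedFDeriv_fderiv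
    _ = ‖iteratedFDeriv ℝ 2 f z‖ := norm_iteratedFDeriv_fderiv
    _ ≤ M2 := hM2 z

lemma lip_fderiv {f : E → ℝ} (hf : ContDiff ℝ 2 f) {M2 : ℝ}
    (hM2 : ∀ z, ‖iteratedFDeriv ℝ 2 f z‖ ≤ M2) (z w : E) :
    ‖fderiv ℝ f z - fderiv ℝ f w‖ ≤ M2 * ‖z - w‖ := by
  have hd : Differentiable ℝ (fderiv ℝ f) :=
    (hf.fderiv_right (m := 1) (by norm_num)).differentiable one_ne_zero
  exact convex_univ.norm_image_sub_le_of_norm_hasFDerivWithin_le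
    (f' := fun z => fderiv ℝ (fderiv ℝ f) z)
    (fun u _ => (hd u).hasFDerivAt.hasFDerivWithinAt)
    (fun u _ => norm_fderiv2_le hM2 u) (mem_univ w) (mem_univ z)




lemma taylor_bd {f : E → ℝ} (hf : ContDiff ℝ 2 f) {M2 : ℝ}
    (hM2 : ∀ z, ‖iteratedFDeriv ℝ 2 f z‖ ≤ M2) (x v : E) :
    ‖f (x + v) - f x - fderiv ℝ f x v‖ ≤ M2 * ‖v‖ * ‖v‖ := by
  have hdf : Differentiable ℝ f := hf.differentiable two_ne_zero
  have h := (convex_closedBall x ‖v‖).norm_image_sub_le_of_norm_hasFDerivWithin_le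
    (f := fun z => f z - fderiv ℝ f x z)
    (f' := fun z => fderiv ℝ f z - fderiv ℝ f x)
    (fun u _ => ((hdf u).hasFDerivAt.sub ((fderiv ℝ f x).hasFDerivAt)).hasFDerivWithinAt)
    (fun (u : EuclideanSpace ℝ (Fin d)) (hu : u ∈ Metric.closedBall x ‖v‖) => by
      have h0 : (0:ℝ) ≤ M2 := le_trans (norm_nonneg _) (hM2 x)
      have huv : ‖u - x‖ ≤ ‖v‖ := by
        simpa [Metric.mem_closedBall, dist_eq_norm] using hu
      exact le_trans (lip_fderiv hf hM2 u x) (mul_le_mul_of_nonneg_left huv h0))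
    (Metric.mem_closedBall_self (norm_nonneg v))
    (show x + v ∈ Metric.closedBall x ‖v‖ by
      simp [Metric.mem_closedBall, dist_eq_norm])
  have e0 : x + v - x = v := add_sub_cancel_left x v
  rw [e0] at h
  have e1 : f (x + v) - fderiv ℝ f x (x + v) - (f x - fderiv ℝ f x x)
      = f (x + v) - f x - fderiv ℝ f x v := by
    rw [map_add]; ring
  calc ‖f (x + v) - f x - fderiv ℝ f x v‖
      = ‖f (x + v) - fderiv ℝ f x (x + v) - (f x - fderiv ℝ f x x)‖ := by rw [e1]
    _ ≤ M2 * ‖v‖ * ‖v‖ := h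

lemma diff_bd {f : E → ℝ} (hf : ContDiff ℝ 2 f) {M2 : ℝ}
    (hM2 : ∀ z, ‖iteratedFDeriv ℝ 2 f z‖ ≤ M2) (x y v : E) :
    ‖(f (x + v) - f x - fderiv ℝ f x v) - (f (y + v) - f y - fderiv ℝ f y v)‖
      ≤ 2 * M2 * ‖v‖ * ‖x - y‖ := by
  have hdf : Differentiable ℝ f := hf.differentiable two_ne_zero
  -- h z = f (z+v) - f z
  have hh : ∀ z : E, HasFDerivAt (fun z => f (z + v) - f z)
      (fderiv ℝ f (z + v) - fderiv ℝ f z) z := by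
    intro z
    have h1 : HasFDerivAt (fun z : E => f (z + v)) (fderiv ℝ f (z + v)) z := by
      have := ((hdf (z + v)).hasFDerivAt).comp z ((hasFDerivAt_id z).add_const v)
      simpa [Function.comp_def] using this
    exact h1.sub (hdf z).hasFDerivAt
  have hmvt := convex_univ.norm_image_sub_le_of_norm_hasFDerivWithin_le
    (f := fun z => f (z + v) - f z)
    (f' := fun z => fderiv ℝ f (z + v) - fderiv ℝ f z)
    (fun u _ => (hh u).hasFDerivWithinAt)
    (fun u _ => by simpa [add_sub_cancel_left] using lip_fderiv hf hM2 (u + v) u)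
    (mem_univ y) (mem_univ x : x ∈ (univ : Set (EuclideanSpace ℝ (Fin d))))
  have h2 : ‖fderiv ℝ f x v - fderiv ℝ f y v‖ ≤ M2 * ‖x - y‖ * ‖v‖ := by
    have : fderiv ℝ f x v - fderiv ℝ f y v = (fderiv ℝ f x - fderiv ℝ f y) v := by simp
    rw [this]
    calc ‖(fderiv ℝ f x - fderiv ℝ f y) v‖ ≤ ‖fderiv ℝ f x - fderiv ℝ f y‖ * ‖v‖ :=
          (fderiv ℝ f x - fderiv ℝ f y).le_opNorm v
      _ ≤ M2 * ‖x - y‖ * ‖v‖ :=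
          mul_le_mul_of_nonneg_right (lip_fderiv hf hM2 x y) (norm_nonneg v)
  have e : (f (x + v) - f x - fderiv ℝ f x v) - (f (y + v) - f y - fderiv ℝ f y v)
      = ((f (x + v) - f x) - (f (y + v) - f y)) - (fderiv ℝ f x v - fderiv ℝ f y v) := by ring
  rw [e]
  calc ‖_ - _‖ ≤ ‖(f (x + v) - f x) - (f (y + v) - f y)‖ + ‖fderiv ℝ f x v - fderiv ℝ f y v‖ :=
        norm_sub_le _ _
    _ ≤ M2 * ‖v‖ * ‖x - y‖ + M2 * ‖x - y‖ * ‖v‖ := add_le_add hmvt h2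
    _ = 2 * M2 * ‖v‖ * ‖x - y‖ := by ring


def FF (α : ℝ) {d : ℕ} (f : EuclideanSpace ℝ (Fin d) → ℝ) (x θ : EuclideanSpace ℝ (Fin d))
    (r : ℝ) : ℝ :=
  (f (x + r • θ) - f x - fderiv ℝ f x (r • θ)) / r ^ (1 + α)

lemma FF_contOn {α : ℝ} {f : E → ℝ} (hf : ContDiff ℝ 2 f) (x θ : E) :
    ContinuousOn (FF α f x θ) (Ioi 0) := by
  have hsm : Continuous fun r : ℝ => x + r • θ :=
    continuous_const.add (continuous_id.smul continuous_const)
  have hnum : Continuous fun r : ℝ =>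
      f (x + r • θ) - f x - fderiv ℝ f x (r • θ) :=
    ((hf.continuous.comp hsm).sub continuous_const).sub
      ((fderiv ℝ f x).continuous.comp (continuous_id.smul continuous_const))
  exact hnum.continuousOn.div
    (continuousOn_id.rpow_const fun r hr => Or.inl (ne_of_gt hr))
    (fun r hr => (Real.rpow_pos_of_pos hr _).ne')

lemma rpow_helper {α r : ℝ} (hr : 0 < r) : r * r / r ^ (1 + α) = r ^ (1 - α) := by
  have h2 : r ^ (2 : ℝ) = r * r := by
    rw [show (2:ℝ) = ((2:ℕ):ℝ) by norm_num, Real.rpow_natCast]; ring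
  rw [← h2, ← Real.rpow_sub hr]
  ring_nf

lemma rpow_helper' {α r : ℝ} (hr : 0 < r) : r / r ^ (1 + α) = r ^ (-α) := by
  rw [show r / r ^ (1 + α) = r ^ (1:ℝ) / r ^ (1 + α) by rw [Real.rpow_one],
    ← Real.rpow_sub hr]
  ring_nf

lemma FF_bd_small {α : ℝ} {f : E → ℝ} (hf : ContDiff ℝ 2 f) {M2 : ℝ}
    (hM2 : ∀ z, ‖iteratedFDeriv ℝ 2 f z‖ ≤ M2) (x θ : E) (hθ : ‖θ‖ = 1)
    {r : ℝ} (hr : 0 < r) : |FF α f x θ r| ≤ M2 * r ^ (1 - α) := by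
  have hv : ‖r • θ‖ = r := by
    rw [norm_smul, hθ, Real.norm_eq_abs, abs_of_pos hr, mul_one]
  have ht := taylor_bd hf hM2 x (r • θ)
  rw [hv] at ht
  have hb : (0:ℝ) < r ^ (1 + α) := Real.rpow_pos_of_pos hr _
  rw [FF, abs_div, abs_of_pos hb]
  calc |f (x + r • θ) - f x - fderiv ℝ f x (r • θ)| / r ^ (1 + α)
      ≤ (M2 * r * r) / r ^ (1 + α) := by
        apply div_le_div_of_nonneg_right ?_ hb.le |>.trans_eq rfl
        exact ht
    _ = M2 * r ^ (1 - α) := by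
        rw [show M2 * r * r / r ^ (1+α) = M2 * (r * r / r ^ (1+α)) by ring, rpow_helper hr]

lemma FF_diff_bd {α : ℝ} {f : E → ℝ} (hf : ContDiff ℝ 2 f) {M2 : ℝ}
    (hM2 : ∀ z, ‖iteratedFDeriv ℝ 2 f z‖ ≤ M2) (x y θ : E) (hθ : ‖θ‖ = 1)
    {r : ℝ} (hr : 0 < r) :
    |FF α f x θ r - FF α f y θ r| ≤ 2 * M2 * ‖x - y‖ * r ^ (-α) := by
  have hv : ‖r • θ‖ = r := by
    rw [norm_smul, hθ, Real.norm_eq_abs, abs_of_pos hr, mul_one]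
  have ht := diff_bd hf hM2 x y (r • θ)
  rw [hv] at ht
  have hb : (0:ℝ) < r ^ (1 + α) := Real.rpow_pos_of_pos hr _
  rw [FF, FF, div_sub_div_same, abs_div, abs_of_pos hb]
  calc _ ≤ (2 * M2 * r * ‖x - y‖) / r ^ (1 + α) := by
        exact div_le_div_of_nonneg_right ht hb.le |>.trans_eq rfl
    _ = 2 * M2 * ‖x - y‖ * r ^ (-α) := by
        rw [show 2*M2*r*‖x-y‖ / r^(1+α) = 2*M2*‖x-y‖*(r / r^(1+α)) by ring, rpow_helper' hr]

lemma FF_bd_large {α : ℝ} {f : E → ℝ} {M0 M1 : ℝ}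
    (hM0 : ∀ z, |f z| ≤ M0) (hM1 : ∀ z, ‖fderiv ℝ f z‖ ≤ M1) (x θ : E) (hθ : ‖θ‖ = 1)
    {r : ℝ} (hr : 1 ≤ r) : |FF α f x θ r| ≤ (2 * M0 + M1) * r ^ (-α) := by
  have hr0 : (0:ℝ) < r := lt_of_lt_of_le one_pos hr
  have hv : ‖r • θ‖ = r := by
    rw [norm_smul, hθ, Real.norm_eq_abs, abs_of_pos hr0, mul_one]
  have hM0' : (0:ℝ) ≤ M0 := le_trans (abs_nonneg _) (hM0 x)
  have hnum : |f (x + r • θ) - f x - fderiv ℝ f x (r • θ)| ≤ (2 * M0 + M1) * r := by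
    calc |f (x + r • θ) - f x - fderiv ℝ f x (r • θ)|
        ≤ |f (x + r • θ) - f x| + |fderiv ℝ f x (r • θ)| := abs_sub _ _
      _ ≤ (|f (x + r • θ)| + |f x|) + ‖fderiv ℝ f x‖ * ‖r • θ‖ :=
          add_le_add (abs_sub _ _) ((fderiv ℝ f x).le_opNorm _)
      _ ≤ (M0 + M0) + M1 * r := by
          rw [hv]
          exact add_le_add (add_le_add (hM0 _) (hM0 _))
            (mul_le_mul_of_nonneg_right (hM1 x) hr0.le)
      _ ≤ (2 * M0) * r + M1 * r := by nlinarith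
      _ = (2 * M0 + M1) * r := by ring
  have hb : (0:ℝ) < r ^ (1 + α) := Real.rpow_pos_of_pos hr0 _
  rw [FF, abs_div, abs_of_pos hb]
  calc _ ≤ ((2 * M0 + M1) * r) / r ^ (1 + α) := div_le_div_of_nonneg_right hnum hb.le
    _ = (2 * M0 + M1) * r ^ (-α) := by
        rw [show (2*M0+M1)*r / r^(1+α) = (2*M0+M1)*(r / r^(1+α)) by ring, rpow_helper' hr0]

lemma FF_int {α : ℝ} (hα1 : 1 < α) (hα2 : α < 2) {f : E → ℝ} (hf : ContDiff ℝ 2 f)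
    {M0 M1 M2 : ℝ} (hM0 : ∀ z, |f z| ≤ M0) (hM1 : ∀ z, ‖fderiv ℝ f z‖ ≤ M1)
    (hM2 : ∀ z, ‖iteratedFDeriv ℝ 2 f z‖ ≤ M2) (x θ : E) (hθ : ‖θ‖ = 1) :
    IntegrableOn (FF α f x θ) (Ioi 0) := by
  have h1 : IntegrableOn (FF α f x θ) (Ioc 0 1) := by
    have hg : IntegrableOn (fun r : ℝ => M2 * r ^ (1 - α)) (Ioc 0 1) := by
      have h := intervalIntegral.intervalIntegrable_rpow' (show (-1:ℝ) < 1 - α by linarith) (a := 0) (b := 1)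
      rw [intervalIntegrable_iff_integrableOn_Ioc_of_le zero_le_one] at h
      exact h.const_mul M2
    refine Integrable.mono' hg
      (((FF_contOn hf x θ).mono Ioc_subset_Ioi_self).aestronglyMeasurable measurableSet_Ioc) ?_
    filter_upwards [ae_restrict_mem measurableSet_Ioc] with r hr
    simpa [Real.norm_eq_abs] using FF_bd_small hf hM2 x θ hθ hr.1
  have h2 : IntegrableOn (FF α f x θ) (Ioi 1) := by
    have hg : IntegrableOn (fun r : ℝ => (2 * M0 + M1) * r ^ (-α)) (Ioi 1) :=
      (integrableOn_Ioi_rpow_of_lt (show -α < -1 by linarith) one_pos).const_mul _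
    refine Integrable.mono' hg
      (((FF_contOn hf x θ).mono (Ioi_subset_Ioi zero_le_one)).aestronglyMeasurable
        measurableSet_Ioi) ?_
    filter_upwards [ae_restrict_mem measurableSet_Ioi] with r hr
    simpa [Real.norm_eq_abs] using FF_bd_large hM0 hM1 x θ hθ (le_of_lt hr)
  have h := h1.union h2
  rwa [Ioc_union_Ioi_eq_Ioi zero_le_one] at h

lemma key_est {α : ℝ} (hα1 : 1 < α) (hα2 : α < 2) {f : E → ℝ} (hf : ContDiff ℝ 2 f)
    {M0 M1 M2 : ℝ} (hM0 : ∀ z, |f z| ≤ M0) (hM1 : ∀ z, ‖fderiv ℝ f z‖ ≤ M1)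
    (hM2 : ∀ z, ‖iteratedFDeriv ℝ 2 f z‖ ≤ M2) (x y θ : E) (hθ : ‖θ‖ = 1)
    (hxy : x ≠ y) :
    |(∫ r in Ioi (0:ℝ), FF α f x θ r) - ∫ r in Ioi (0:ℝ), FF α f y θ r|
      ≤ 2 * M2 * (1 / (2 - α) + 1 / (α - 1)) * ‖x - y‖ ^ (2 - α) := by
  set δ : ℝ := ‖x - y‖ with hδdef
  have hδ : 0 < δ := by
    rw [hδdef, norm_pos_iff]
    exact sub_ne_zero.mpr hxy
  have hM2' : (0:ℝ) ≤ M2 := le_trans (norm_nonneg _) (hM2 x)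
  have hix := FF_int hα1 hα2 hf hM0 hM1 hM2 x θ hθ
  have hiy := FF_int hα1 hα2 hf hM0 hM1 hM2 y θ hθ
  have hd : IntegrableOn (fun r => |FF α f x θ r - FF α f y θ r|) (Ioi 0) :=
    (hix.sub hiy).abs
  -- integrability of the bounding functions
  have hg1 : IntegrableOn (fun r : ℝ => 2 * M2 * r ^ (1 - α)) (Ioc 0 δ) := by
    have h := intervalIntegral.intervalIntegrable_rpow'
      (show (-1:ℝ) < 1 - α by linarith) (a := 0) (b := δ)
    rw [intervalIntegrable_iff_integrableOn_Ioc_of_le hδ.le] at h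
    exact h.const_mul _
  have hg2 : IntegrableOn (fun r : ℝ => 2 * M2 * δ * r ^ (-α)) (Ioi δ) :=
    (integrableOn_Ioi_rpow_of_lt (show -α < -1 by linarith) hδ).const_mul _
  have hsplit : (Ioc (0:ℝ) δ) ∪ (Ioi δ) = Ioi 0 := Ioc_union_Ioi_eq_Ioi hδ.le
  rw [← integral_sub hix hiy]
  have habs : |∫ r in Ioi (0:ℝ), (FF α f x θ r - FF α f y θ r)|
      ≤ ∫ r in Ioi (0:ℝ), |FF α f x θ r - FF α f y θ r| := by
    simpa [Real.norm_eq_abs] using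
      norm_integral_le_integral_norm (μ := volume.restrict (Ioi 0))
        (fun r => FF α f x θ r - FF α f y θ r)
  refine habs.trans ?_
  rw [← hsplit, setIntegral_union (Ioc_disjoint_Ioi le_rfl) measurableSet_Ioi
    (hd.mono_set (hsplit ▸ subset_union_left)) (hd.mono_set (hsplit ▸ subset_union_right))]
  have hb1 : (∫ r in Ioc (0:ℝ) δ, |FF α f x θ r - FF α f y θ r|)
      ≤ ∫ r in Ioc (0:ℝ) δ, 2 * M2 * r ^ (1 - α) := by
    refine setIntegral_mono_on (hd.mono_set (hsplit ▸ subset_union_left)) hg1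
      measurableSet_Ioc ?_
    intro r hr
    calc |FF α f x θ r - FF α f y θ r| ≤ |FF α f x θ r| + |FF α f y θ r| := abs_sub _ _
      _ ≤ M2 * r ^ (1 - α) + M2 * r ^ (1 - α) :=
          add_le_add (FF_bd_small hf hM2 x θ hθ hr.1) (FF_bd_small hf hM2 y θ hθ hr.1)
      _ = 2 * M2 * r ^ (1 - α) := by ring
  have hb2 : (∫ r in Ioi δ, |FF α f x θ r - FF α f y θ r|)
      ≤ ∫ r in Ioi δ, 2 * M2 * δ * r ^ (-α) := by
    refine setIntegral_mono_on (hd.mono_set (hsplit ▸ subset_union_right)) hg2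
      measurableSet_Ioi ?_
    intro r hr
    exact FF_diff_bd hf hM2 x y θ hθ (lt_trans hδ hr)
  refine (add_le_add hb1 hb2).trans ?_
  -- compute the two integrals
  have hI1 : (∫ r in Ioc (0:ℝ) δ, 2 * M2 * r ^ (1 - α)) = 2 * M2 * (δ ^ (2 - α) / (2 - α)) := by
    rw [← intervalIntegral.integral_of_le hδ.le, intervalIntegral.integral_const_mul,
      integral_rpow (Or.inl (show (-1:ℝ) < 1 - α by linarith))]
    rw [Real.zero_rpow (show (1 - α + 1 : ℝ) ≠ 0 by intro h; linarith [h])]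
    rw [show (1 - α + 1 : ℝ) = 2 - α by ring]
    ring
  have hI2 : (∫ r in Ioi δ, 2 * M2 * δ * r ^ (-α)) = 2 * M2 * δ * (-δ ^ (-α + 1) / (-α + 1)) := by
    rw [integral_const_mul, integral_Ioi_rpow_of_lt (show -α < -1 by linarith) hδ]
  rw [hI1, hI2]
  have hδ2 : δ ^ (2 - α) = δ * δ ^ (-α + 1) := by
    rw [show (2 - α : ℝ) = 1 + (-α + 1) by ring, Real.rpow_add hδ, Real.rpow_one]
  rw [hδ2]
  have h2α : (2 - α : ℝ) ≠ 0 := by intro h; linarith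
  have h1α : (-α + 1 : ℝ) ≠ 0 := by intro h; linarith
  have hα1' : (α - 1 : ℝ) ≠ 0 := by intro h; linarith
  apply le_of_eq
  field_simp
  ring

lemma Ix_aesm {α : ℝ} {f : E → ℝ} (hf : ContDiff ℝ 2 f) (x : E)
    (ν : Measure (Metric.sphere (0 : E) 1)) [SFinite ν] :
    AEStronglyMeasurable
      (fun θ : Metric.sphere (0 : E) 1 => ∫ r in Ioi (0:ℝ), FF α f x (θ : E) r) ν := by
  have hsm : Continuous fun p : Metric.sphere (0 : E) 1 × ℝ => x + p.2 • (p.1 : E) :=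
    continuous_const.add (continuous_snd.smul (continuous_subtype_val.comp continuous_fst))
  have hcont : ContinuousOn
      (fun p : Metric.sphere (0 : E) 1 × ℝ => FF α f x (p.1 : E) p.2)
      (univ ×ˢ Ioi (0:ℝ)) := by
    have hnum : Continuous fun p : Metric.sphere (0 : E) 1 × ℝ =>
        f (x + p.2 • (p.1 : E)) - f x - fderiv ℝ f x (p.2 • (p.1 : E)) :=
      ((hf.continuous.comp hsm).sub continuous_const).sub
        ((fderiv ℝ f x).continuous.comp
          (continuous_snd.smul (continuous_subtype_val.comp continuous_fst)))
    exact hnum.continuousOn.div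
      ((continuous_snd.continuousOn).rpow_const fun p hp => Or.inl (ne_of_gt hp.2))
      (fun p hp => (Real.rpow_pos_of_pos hp.2 _).ne')
  have hm : AEStronglyMeasurable
      (fun p : Metric.sphere (0 : E) 1 × ℝ => FF α f x (p.1 : E) p.2)
      (ν.prod (volume.restrict (Ioi 0))) := by
    rw [show ν.prod ((volume : Measure ℝ).restrict (Ioi (0:ℝ)))
        = (ν.prod (volume : Measure ℝ)).restrict (univ ×ˢ Ioi (0:ℝ)) by
      rw [← Measure.prod_restrict, Measure.restrict_univ]]
    exact hcont.aestronglyMeasurable (MeasurableSet.univ.prod measurableSet_Ioi)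
  exact hm.integral_prod_right'

lemma Ix_bd {α : ℝ} (hα1 : 1 < α) (hα2 : α < 2) {f : E → ℝ} (hf : ContDiff ℝ 2 f)
    {M0 M1 M2 : ℝ} (hM0 : ∀ z, |f z| ≤ M0) (hM1 : ∀ z, ‖fderiv ℝ f z‖ ≤ M1)
    (hM2 : ∀ z, ‖iteratedFDeriv ℝ 2 f z‖ ≤ M2) (x θ : E) (hθ : ‖θ‖ = 1) :
    |∫ r in Ioi (0:ℝ), FF α f x θ r| ≤
      (∫ r in Ioc (0:ℝ) 1, M2 * r ^ (1 - α)) + ∫ r in Ioi (1:ℝ), (2 * M0 + M1) * r ^ (-α) := by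
  have hix := FF_int hα1 hα2 hf hM0 hM1 hM2 x θ hθ
  have hsplit : (Ioc (0:ℝ) 1) ∪ (Ioi 1) = Ioi 0 := Ioc_union_Ioi_eq_Ioi zero_le_one
  have hg1 : IntegrableOn (fun r : ℝ => M2 * r ^ (1 - α)) (Ioc 0 1) := by
    have h := intervalIntegral.intervalIntegrable_rpow'
      (show (-1:ℝ) < 1 - α by linarith) (a := 0) (b := 1)
    rw [intervalIntegrable_iff_integrableOn_Ioc_of_le zero_le_one] at h
    exact h.const_mul _
  have hg2 : IntegrableOn (fun r : ℝ => (2 * M0 + M1) * r ^ (-α)) (Ioi 1) :=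
    (integrableOn_Ioi_rpow_of_lt (show -α < -1 by linarith) one_pos).const_mul _
  have hia : IntegrableOn (fun r => |FF α f x θ r|) (Ioi 0) := hix.abs
  have habs : |∫ r in Ioi (0:ℝ), FF α f x θ r| ≤ ∫ r in Ioi (0:ℝ), |FF α f x θ r| := by
    simpa [Real.norm_eq_abs] using
      norm_integral_le_integral_norm (μ := volume.restrict (Ioi 0)) (FF α f x θ)
  refine habs.trans ?_
  rw [← hsplit, setIntegral_union (Ioc_disjoint_Ioi le_rfl) measurableSet_Ioi
    (hia.mono_set (hsplit ▸ subset_union_left))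
    (hia.mono_set (hsplit ▸ subset_union_right))]
  refine add_le_add ?_ ?_
  · refine setIntegral_mono_on (hia.mono_set (hsplit ▸ subset_union_left)) hg1
      measurableSet_Ioc ?_
    exact fun r hr => FF_bd_small hf hM2 x θ hθ hr.1
  · refine setIntegral_mono_on (hia.mono_set (hsplit ▸ subset_union_right)) hg2
      measurableSet_Ioi ?_
    exact fun r hr => FF_bd_large hM0 hM1 x θ hθ (le_of_lt hr)


end aux

/-- The generator `L^{α,ν}` (compensated form, for `α ∈ (1,2)`). -/
def genL {d : ℕ} (α : ℝ)
    (ν : Measure (Metric.sphere (0 : EuclideanSpace ℝ (Fin d)) 1))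
    (f : EuclideanSpace ℝ (Fin d) → ℝ) (x : EuclideanSpace ℝ (Fin d)) : ℝ :=
  (∫ y in Set.Ioi (0 : ℝ), (1 - Real.cos y) / y ^ (1 + α))⁻¹ *
    ∫ θ, (∫ r in Set.Ioi (0 : ℝ),
      (f (x + r • (θ : EuclideanSpace ℝ (Fin d))) - f x -
        fderiv ℝ f x (r • (θ : EuclideanSpace ℝ (Fin d)))) / r ^ (1 + α)) ∂ν

theorem stmt_7 {d : ℕ} (α : ℝ) (hα : α ∈ Set.Ioo (1 : ℝ) 2)
    (ν : Measure (Metric.sphere (0 : EuclideanSpace ℝ (Fin d)) 1))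
    [IsProbabilityMeasure ν] :
    ∃ C > (0 : ℝ), ∀ f : EuclideanSpace ℝ (Fin d) → ℝ, ContDiff ℝ 2 f →
      (∃ M0, ∀ x, |f x| ≤ M0) → (∃ M1, ∀ x, ‖fderiv ℝ f x‖ ≤ M1) →
      ∀ M2 : ℝ, (∀ x, ‖iteratedFDeriv ℝ 2 f x‖ ≤ M2) →
      ∀ x y : EuclideanSpace ℝ (Fin d),
        |genL α ν f x - genL α ν f y| ≤ C * M2 * ‖x - y‖ ^ (2 - α) := by
  obtain ⟨hα1, hα2⟩ := hα
  have h2α : (0:ℝ) < 2 - α := by linarith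
  have h1α : (0:ℝ) < α - 1 := by linarith
  set c : ℝ := (∫ y in Set.Ioi (0 : ℝ), (1 - Real.cos y) / y ^ (1 + α))⁻¹ with hc
  set K0 : ℝ := 2 * (1 / (2 - α) + 1 / (α - 1)) with hK0
  have hK0pos : 0 < K0 := by
    rw [hK0]
    have := one_div_pos.mpr h2α
    have := one_div_pos.mpr h1α
    linarith
  have hCpos : 0 < |c| * K0 + 1 := by
    have : 0 ≤ |c| * K0 := mul_nonneg (abs_nonneg _) hK0pos.le
    linarith
  refine ⟨|c| * K0 + 1, hCpos, ?_⟩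
  intro f hf hM0e hM1e M2 hM2 x y
  obtain ⟨M0, hM0⟩ := hM0e
  obtain ⟨M1, hM1⟩ := hM1e
  have hM2' : (0:ℝ) ≤ M2 := le_trans (norm_nonneg _) (hM2 0)
  rcases eq_or_ne x y with rfl | hxy
  · simp [sub_self, Real.zero_rpow (ne_of_gt h2α)]
  · have hθ1 : ∀ θ : Metric.sphere (0 : EuclideanSpace ℝ (Fin d)) 1,
        ‖(θ : EuclideanSpace ℝ (Fin d))‖ = 1 := fun θ => by
      simp [mem_sphere_zero_iff_norm.mp θ.2]
    have hrw : ∀ z : EuclideanSpace ℝ (Fin d), genL α ν f z =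
        c * ∫ θ, (∫ r in Ioi (0:ℝ), FF α f z (θ : EuclideanSpace ℝ (Fin d)) r) ∂ν :=
      fun z => rfl
    set K : ℝ := (∫ r in Ioc (0:ℝ) 1, M2 * r ^ (1 - α)) +
      ∫ r in Ioi (1:ℝ), (2 * M0 + M1) * r ^ (-α) with hKdef
    have hIx : Integrable
        (fun θ : Metric.sphere (0 : EuclideanSpace ℝ (Fin d)) 1 =>
          ∫ r in Ioi (0:ℝ), FF α f x (θ : EuclideanSpace ℝ (Fin d)) r) ν :=
      Integrable.mono' (integrable_const K) (Ix_aesm hf x ν)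
        (ae_of_all _ fun θ => by
          simpa [Real.norm_eq_abs] using Ix_bd hα1 hα2 hf hM0 hM1 hM2 x _ (hθ1 θ))
    have hIy : Integrable
        (fun θ : Metric.sphere (0 : EuclideanSpace ℝ (Fin d)) 1 =>
          ∫ r in Ioi (0:ℝ), FF α f y (θ : EuclideanSpace ℝ (Fin d)) r) ν :=
      Integrable.mono' (integrable_const K) (Ix_aesm hf y ν)
        (ae_of_all _ fun θ => by
          simpa [Real.norm_eq_abs] using Ix_bd hα1 hα2 hf hM0 hM1 hM2 y _ (hθ1 θ))
    rw [hrw x, hrw y, ← mul_sub, abs_mul, ← integral_sub hIx hIy]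
    have hbound : ∀ θ : Metric.sphere (0 : EuclideanSpace ℝ (Fin d)) 1,
        ‖(∫ r in Ioi (0:ℝ), FF α f x (θ : EuclideanSpace ℝ (Fin d)) r) -
          ∫ r in Ioi (0:ℝ), FF α f y (θ : EuclideanSpace ℝ (Fin d)) r‖
          ≤ 2 * M2 * (1 / (2 - α) + 1 / (α - 1)) * ‖x - y‖ ^ (2 - α) := fun θ => by
      simpa [Real.norm_eq_abs] using
        key_est hα1 hα2 hf hM0 hM1 hM2 x y _ (hθ1 θ) hxy
    have hmain := norm_integral_le_of_norm_le_const (μ := ν) (ae_of_all _ hbound)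
    rw [probReal_univ, mul_one, Real.norm_eq_abs] at hmain
    calc |c| * |∫ θ, ((∫ r in Ioi (0:ℝ), FF α f x (θ : EuclideanSpace ℝ (Fin d)) r) -
            ∫ r in Ioi (0:ℝ), FF α f y (θ : EuclideanSpace ℝ (Fin d)) r) ∂ν|
        ≤ |c| * (2 * M2 * (1 / (2 - α) + 1 / (α - 1)) * ‖x - y‖ ^ (2 - α)) :=
          mul_le_mul_of_nonneg_left hmain (abs_nonneg c)
      _ = (|c| * K0) * (M2 * ‖x - y‖ ^ (2 - α)) := by rw [hK0]; ring
      _ ≤ (|c| * K0 + 1) * (M2 * ‖x - y‖ ^ (2 - α)) :=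
          mul_le_mul_of_nonneg_right (by linarith)
            (mul_nonneg hM2' (Real.rpow_nonneg (norm_nonneg _) _))
      _ = (|c| * K0 + 1) * M2 * ‖x - y‖ ^ (2 - α) := by ring
end
end
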